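/- Let S be a discrete commutative semigroup and A ⊆ S. Then A is a J-set if and only if J(S) ∩ cl(A) is nonempty in βS. -/

import Mathlib

attribute [local instance] Ultrafilter.semigroup

variable {S : Type*}

/-- The product `∏_{t ∈ H} f t` in a (commutative) semigroup, computed in increasing
order of indices; junk value `f 0` if `H = ∅`. -/
def semigroupProd [Semigroup S] (f : ℕ → S) (H : Finset ℕ) : S :=
  if h : H.Nonempty then
    (((H.erase (H.min' h)).sort (· ≤ ·)).map f).foldl (· * ·) (f (H.min' h))
  else f 0

/-- `A` is a J-set in the commutative semigroup `S`. -/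
def IsJSet [CommSemigroup S] (A : Set S) : Prop :=
  ∀ F : Finset (ℕ → S), ∃ (a : S) (H : Finset ℕ), H.Nonempty ∧
    ∀ f ∈ F, a * semigroupProd f H ∈ A

/-- `J(S)`: the ultrafilters on `S` all of whose members are J-sets. -/
def JSetUltra [CommSemigroup S] : Set (Ultrafilter S) :=
  {p | ∀ A ∈ p, IsJSet A}

/-- `semigroupProd` agrees with the big product in `WithOne S`. -/
lemma coe_semigroupProd [CommSemigroup S] (f : ℕ → S) {H : Finset ℕ} (h : H.Nonempty) :
    ((semigroupProd f H : S) : WithOne S) = ∏ t ∈ H, (f t : WithOne S) := by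
  rw [semigroupProd, dif_pos h]
  have hfold : ∀ (l : List S) (b : S),
      ((l.foldl (· * ·) b : S) : WithOne S)
        = (b : WithOne S) * (l.map (fun s : S => (s : WithOne S))).prod := by
    intro l
    induction l with
    | nil => intro b; simp
    | cons a l ih => intro b; simp [List.foldl_cons, ih, mul_assoc]
  rw [hfold]
  have h2 : ((((H.erase (H.min' h)).sort (· ≤ ·)).map f).map
      (fun s : S => (s : WithOne S))).prod = ∏ t ∈ H.erase (H.min' h), (f t : WithOne S) := by
    rw [List.map_map, Finset.prod_eq_multiset_prod, ← Finset.sort_eq (H.erase (H.min' h)) (· ≤ ·),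
      Multiset.map_coe, Multiset.prod_coe]
    rfl
  rw [h2]
  exact Finset.mul_prod_erase H (fun t => (f t : WithOne S)) (H.min'_mem h)

/-- A product `↑a * ∏ ↑(v j)` of coercions into `WithOne S` is itself a coercion. -/
lemma exists_coe_mul_prod [CommSemigroup S] {ι : Type*} (a : S) (s : Finset ι) (v : ι → S) :
    ∃ z : S, (z : WithOne S) = ↑a * ∏ j ∈ s, (v j : WithOne S) := by
  classical
  induction s using Finset.induction_on generalizing a with
  | empty => exact ⟨a, by simp⟩
  | @insert j s hj ih =>
      obtain ⟨z, hz⟩ := ih (a * v j)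
      exact ⟨z, by rw [hz, WithOne.coe_mul, Finset.prod_insert hj, mul_assoc]⟩

lemma exists_coe_mul_prod2 [CommSemigroup S] {ι₁ ι₂ : Type*} (a : S) (s : Finset ι₁)
    (t : Finset ι₂) (v : ι₁ → ι₂ → S) :
    ∃ z : S, (z : WithOne S) = ↑a * ∏ i ∈ s, ∏ j ∈ t, (v i j : WithOne S) := by
  rw [← Finset.prod_product']
  exact exists_coe_mul_prod a (s ×ˢ t) (fun q => v q.1 q.2)

lemma IsJSet.mono [CommSemigroup S] {A B : Set S} (h : IsJSet A) (hAB : A ⊆ B) : IsJSet B := by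
  intro F
  obtain ⟨a, H, hne, hm⟩ := h F
  exact ⟨a, H, hne, fun f hf => hAB (hm f hf)⟩

lemma IsJSet.nonempty [CommSemigroup S] {A : Set S} (h : IsJSet A) : A.Nonempty := by
  obtain ⟨a0, -, -, -⟩ := h ∅
  obtain ⟨a, H, hne, hm⟩ := h {fun _ => a0}
  exact ⟨_, hm _ (Finset.mem_singleton_self _)⟩

/-- Partition regularity of J-sets (two pieces). -/
theorem IsJSet.union [CommSemigroup S] {A B : Set S} (hC : IsJSet (A ∪ B)) :
    IsJSet A ∨ IsJSet B := by
  classical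
  by_cases hA : IsJSet A
  · exact Or.inl hA
  right
  rw [IsJSet] at hA
  push_neg at hA
  obtain ⟨F₀, hF₀⟩ := hA
  obtain ⟨a0, H0, H0ne, -⟩ := hC ∅
  have hF₀ne : F₀.Nonempty := by
    rcases Finset.eq_empty_or_nonempty F₀ with rfl | h
    · obtain ⟨f, hf, -⟩ := hF₀ a0 {0} ⟨0, by simp⟩
      simp at hf
    · exact h
  intro F
  rcases Finset.eq_empty_or_nonempty F with rfl | hFne
  · exact ⟨a0, H0, H0ne, by simp⟩
  haveI : Nonempty {f // f ∈ F₀} := ⟨⟨hF₀ne.choose, hF₀ne.choose_spec⟩⟩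
  haveI : Nonempty {f // f ∈ F} := ⟨⟨hFne.choose, hFne.choose_spec⟩⟩
  obtain ⟨ι, ιfin, hHJ⟩ :=
    Combinatorics.Line.exists_mono_in_high_dimension {f // f ∈ F₀} {f // f ∈ F}
  haveI := ιfin
  haveI ιne : Nonempty ι := by
    obtain ⟨l, -⟩ := hHJ (fun _ => Classical.arbitrary _)
    obtain ⟨i, -⟩ := l.proper
    exact ⟨i⟩
  letI : Encodable ι := Fintype.toEncodable ι
  set e : ℕ × ι → ℕ := Encodable.encode with he_def
  have he : Function.Injective e := Encodable.encode_injective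
  -- the auxiliary sequences
  have gex : ∀ (f : {f // f ∈ F}) (w : ι → {f // f ∈ F₀}) (t : ℕ), ∃ z : S,
      (z : WithOne S) = ↑(f.1 t) * ∏ j : ι, ((w j).1 (e (t, j)) : WithOne S) :=
    fun f w t => exists_coe_mul_prod (f.1 t) Finset.univ _
  set g : {f // f ∈ F} → (ι → {f // f ∈ F₀}) → ℕ → S :=
    fun f w t => (gex f w t).choose with hg_def
  have hg : ∀ f w t, ((g f w t : S) : WithOne S)
      = ↑(f.1 t) * ∏ j : ι, ((w j).1 (e (t, j)) : WithOne S) :=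
    fun f w t => (gex f w t).choose_spec
  obtain ⟨a, H, Hne, hmem⟩ := hC (Finset.image
    (fun p : {f // f ∈ F} × (ι → {f // f ∈ F₀}) => g p.1 p.2) Finset.univ)
  have hmem' : ∀ (f : {f // f ∈ F}) (w : ι → {f // f ∈ F₀}),
      a * semigroupProd (g f w) H ∈ A ∪ B :=
    fun f w => hmem _ (Finset.mem_image_of_mem _ (Finset.mem_univ (f, w)))
  have key : ∀ (f : {f // f ∈ F}) (w : ι → {f // f ∈ F₀}),
      ((a * semigroupProd (g f w) H : S) : WithOne S)
        = ↑a * (∏ t ∈ H, (f.1 t : WithOne S)) *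
          ∏ t ∈ H, ∏ j : ι, ((w j).1 (e (t, j)) : WithOne S) := by
    intro f w
    rw [WithOne.coe_mul, coe_semigroupProd _ Hne,
      Finset.prod_congr rfl (fun t _ => hg f w t), Finset.prod_mul_distrib, mul_assoc]
  by_cases hcase : ∃ w : ι → {f // f ∈ F₀},
      ∀ f : {f // f ∈ F}, a * semigroupProd (g f w) H ∈ B
  · -- found a witness for B
    obtain ⟨w, hw⟩ := hcase
    obtain ⟨z, hz⟩ := exists_coe_mul_prod2 a H Finset.univ
      (fun t j => (w j).1 (e (t, j)))
    refine ⟨z, H, Hne, fun f hf => ?_⟩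
    have hB := hw ⟨f, hf⟩
    have heq : z * semigroupProd f H = a * semigroupProd (g ⟨f, hf⟩ w) H := by
      apply WithOne.coe_inj.mp
      rw [WithOne.coe_mul, coe_semigroupProd _ Hne, hz, key ⟨f, hf⟩ w]
      exact mul_right_comm _ _ _
    rw [heq]
    exact hB
  · -- derive a contradiction with A not being a J-set, via Hales–Jewett
    exfalso
    push_neg at hcase
    have hcol : ∀ w : ι → {f // f ∈ F₀}, ∃ f : {f // f ∈ F},
        a * semigroupProd (g f w) H ∈ A := by
      intro w
      obtain ⟨f, hf⟩ := hcase w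
      exact ⟨f, (hmem' f w).resolve_right hf⟩
    choose col hcolA using hcol
    obtain ⟨l, c, hlc⟩ := hHJ col
    set W : Finset ι := Finset.univ.filter (fun j => l.idxFun j = none) with hW_def
    have hWmem : ∀ j, j ∈ W ↔ l.idxFun j = none := by
      intro j; simp [hW_def]
    have hWne : W.Nonempty := by
      obtain ⟨i, hi⟩ := l.proper
      exact ⟨i, (hWmem i).mpr hi⟩
    set Hs : Finset ℕ := (H ×ˢ W).image e with hHs_def
    have hHsne : Hs.Nonempty :=
      ⟨e (Hne.choose, hWne.choose), Finset.mem_image_of_mem e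
        (Finset.mem_product.mpr ⟨Hne.choose_spec, hWne.choose_spec⟩)⟩
    have x₀ : {f // f ∈ F₀} := Classical.arbitrary _
    obtain ⟨z₁, hz₁⟩ := exists_coe_mul_prod a H (fun t => c.1 t)
    obtain ⟨z₂, hz₂⟩ := exists_coe_mul_prod2 z₁ H Wᶜ
      (fun t j => (l x₀ j).1 (e (t, j)))
    obtain ⟨f₀, hf₀, hnotA⟩ := hF₀ z₂ Hs hHsne
    set x : {f // f ∈ F₀} := ⟨f₀, hf₀⟩ with hx_def
    have hAmem := hcolA (l x)
    rw [hlc x] at hAmem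
    have claim : z₂ * semigroupProd f₀ Hs = a * semigroupProd (g c (l x)) H := by
      apply WithOne.coe_inj.mp
      rw [WithOne.coe_mul, coe_semigroupProd _ hHsne, hz₂, hz₁, key c (l x)]
      have e1 : ∏ u ∈ Hs, (f₀ u : WithOne S)
          = ∏ t ∈ H, ∏ j ∈ W, ((f₀ (e (t, j)) : WithOne S)) := by
        rw [hHs_def, Finset.prod_image (fun q _ q' _ h => he h), ← Finset.prod_product']
      have e2 : ∀ t, (∏ j : ι, (((l x j).1 (e (t, j)) : WithOne S)))
          = (∏ j ∈ W, ((f₀ (e (t, j)) : WithOne S))) *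
            ∏ j ∈ Wᶜ, (((l x₀ j).1 (e (t, j)) : WithOne S)) := by
        intro t
        rw [← Finset.prod_mul_prod_compl W]
        congr 1
        · refine Finset.prod_congr rfl (fun j hj => ?_)
          rw [l.apply_none x j ((hWmem j).mp hj)]
        · refine Finset.prod_congr rfl (fun j hj => ?_)
          have hj' : ¬ l.idxFun j = none := by
            intro h
            exact (Finset.mem_compl.mp hj) ((hWmem j).mpr h)
          rcases hv : l.idxFun j with - | v
          · exact absurd hv hj'
          · have h1 : l x j = v := by
              rw [Combinatorics.Line.coe_apply, hv]; rfl
            have h2 : l x₀ j = v := by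
              rw [Combinatorics.Line.coe_apply, hv]; rfl
            rw [h1, h2]
      rw [e1, Finset.prod_congr rfl (fun t _ => e2 t), Finset.prod_mul_distrib,
        ← mul_assoc]
      exact mul_right_comm _ _ _
    rw [claim] at hnotA
    exact hnotA hAmem

lemma IsJSet.of_subset_sUnion [CommSemigroup S] {t : Set (Set S)} (ht : t.Finite) :
    ∀ {A : Set S}, IsJSet A → A ⊆ ⋃₀ t → ∃ X ∈ t, IsJSet X := by
  refine Set.Finite.induction_on
    (motive := fun t _ => ∀ {A : Set S}, IsJSet A → A ⊆ ⋃₀ t → ∃ X ∈ t, IsJSet X) t ht ?_ ?_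
  · intro A hA hsub
    obtain ⟨x, hx⟩ := hA.nonempty
    simpa using hsub hx
  · intro X t hX htfin ih A hA hsub
    rw [Set.sUnion_insert] at hsub
    rcases (hA.mono hsub).union with h | h
    · exact ⟨X, Set.mem_insert _ _, h⟩
    · obtain ⟨Y, hYt, hY⟩ := ih h (subset_refl _)
      exact ⟨Y, Set.mem_insert_of_mem _ hYt, hY⟩

/-- `A` is a J-set iff `J(S) ∩ cl A ≠ ∅` in `βS`, where `cl A = {p : A ∈ p}`. -/
theorem isJSet_iff_closure_inter [CommSemigroup S] (A : Set S) :
    IsJSet A ↔ (JSetUltra ∩ {p : Ultrafilter S | A ∈ p}).Nonempty := by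
  constructor
  · intro hA
    classical
    set 𝒢 : Set (Set S) := insert A {X | ¬ IsJSet Xᶜ} with h𝒢
    have hne : (Filter.generate 𝒢).NeBot := by
      rw [Filter.generate_neBot_iff]
      intro t hts htf
      by_contra hemp
      rw [Set.not_nonempty_iff_eq_empty] at hemp
      set t' : Set (Set S) := t \ {A} with ht'
      have ht'f : t'.Finite := htf.subset (Set.diff_subset)
      have hsub : A ⊆ ⋃₀ (compl '' t') := by
        intro x hx
        by_contra hnx
        have hxall : ∀ X ∈ t, x ∈ X := by
          intro X hXt
          rcases eq_or_ne X A with rfl | hXA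
          · exact hx
          · by_contra hxX
            exact hnx ⟨Xᶜ, ⟨X, ⟨hXt, hXA⟩, rfl⟩, hxX⟩
        have hxint : x ∈ ⋂₀ t := fun X hX => hxall X hX
        rw [hemp] at hxint
        exact hxint
      obtain ⟨Y, hYmem, hYJ⟩ := hA.of_subset_sUnion (ht'f.image compl) hsub
      obtain ⟨X, hXt', rfl⟩ := hYmem
      have hXn : ¬ IsJSet Xᶜ := by
        have hX𝒢 := hts hXt'.1
        rcases hX𝒢 with rfl | hX
        · exact absurd rfl hXt'.2
        · exact hX
      exact hXn hYJ
    obtain ⟨p, hp⟩ := Ultrafilter.exists_le (Filter.generate 𝒢)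
    refine ⟨p, ?_, hp (Filter.mem_generate_of_mem (Set.mem_insert _ _))⟩
    intro X hX
    by_contra hnX
    have hXc : Xᶜ ∈ p := hp (Filter.mem_generate_of_mem
      (Set.mem_insert_of_mem _ (by simpa using hnX)))
    have hbot : (∅ : Set S) ∈ (p : Filter S) := by
      have h2 := Filter.inter_mem (Ultrafilter.mem_coe.mpr hX) (Ultrafilter.mem_coe.mpr hXc)
      simp only [Set.inter_compl_self] at h2
      exact h2
    exact Filter.empty_notMem (p : Filter S) hbot
  · rintro ⟨p, hp, hA⟩
    exact hp A hA
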